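/- In the group G = ⟨x, y | x^7 = 1, relations of CH70.8⟩ defined as G = C_29 ⋊ C_7 with x of order 7, t of order 29, and t^x = t^r for r ∈ (Z/29)^* of order 7: the relation x^{-1} t^{-1} x^2 t x^{-1} t = 1 (arising from the presentation via y = x^{-1} t) holds if and only if -r + r^{-1} + 1 = 0 in F_29, if and only if r = -5 (mod 29). -/
import Mathlib


lemma stmt18_aux : ∀ a : ZMod 29, a ^ 7 = 1 → (a ^ 2 = a + 1 ↔ a = -5) := by
  decide

/-- In the metacyclic group `G = C₂₉ ⋊ C₇` with `x` of order `7`, `t` of order `29`, and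
`x⁻¹ t x = t^r` where `r` has multiplicative order `7` mod `29`: the relation
`x⁻¹ t⁻¹ x² t x⁻¹ t = 1` (from the presentation CH70.8, via `y = x⁻¹ t`) holds iff
`-r + r⁻¹ + 1 = 0` in `F₂₉`, iff `r ≡ -5 (mod 29)`. -/
theorem stmt18 (G : Type*) [Group G] (x t : G) (r : ℕ)
    (hx : orderOf x = 7) (ht : orderOf t = 29)
    (hr : orderOf (r : ZMod 29) = 7)
    (hconj : x⁻¹ * t * x = t ^ r) :
    (x⁻¹ * t⁻¹ * x ^ 2 * t * x⁻¹ * t = 1 ↔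
      -(r : ZMod 29) + (r : ZMod 29)⁻¹ + 1 = 0) ∧
    (-(r : ZMod 29) + (r : ZMod 29)⁻¹ + 1 = 0 ↔ (r : ZMod 29) = -5) := by
  haveI : Fact (Nat.Prime 29) := ⟨by norm_num⟩
  set a : ZMod 29 := (r : ZMod 29) with ha
  have ha7 : a ^ 7 = 1 := by rw [← hr]; exact pow_orderOf_eq_one _
  have ha0 : a ≠ 0 := by
    intro h
    rw [h, zero_pow (by norm_num)] at ha7
    exact one_ne_zero ha7.symm
  have hbridge : (-a + a⁻¹ + 1 = 0) ↔ a ^ 2 = a + 1 := by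
    constructor
    · intro h
      have hu : a * a⁻¹ = 1 := mul_inv_cancel₀ ha0
      linear_combination (-a) * h + hu
    · intro h
      have hinv : a⁻¹ = a - 1 := by
        field_simp
        linear_combination -h
      rw [hinv]; ring
  have key : ∀ m n : ℕ, t ^ m = t ^ n ↔ (m : ZMod 29) = (n : ZMod 29) := by
    intro m n
    rw [pow_eq_pow_iff_modEq, ht, ZMod.natCast_eq_natCast_iff]
  obtain ⟨s, hs⟩ : ∃ s : ℕ, (s : ZMod 29) = a⁻¹ :=
    ⟨(a⁻¹).val, by simp [ZMod.natCast_val, ZMod.cast_id]⟩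
  have hc : (x⁻¹ * t * x) ^ s = x⁻¹ * t ^ s * x := by
    simpa using conj_pow (a := x⁻¹) (b := t) (i := s)
  have h1 : x⁻¹ * t ^ s * x = t ^ (r * s) := by
    rw [← hc, hconj, ← pow_mul]
  have h2 : t ^ (r * s) = t ^ 1 := by
    rw [key]
    push_cast
    rw [hs, ← ha]
    exact mul_inv_cancel₀ ha0
  rw [h2, pow_one] at h1
  have hxt : x * t * x⁻¹ = t ^ s := by
    have h3 : x * (x⁻¹ * t ^ s * x) * x⁻¹ = x * t * x⁻¹ := by rw [h1]
    simpa [mul_assoc] using h3.symm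
  have hw : x⁻¹ * t⁻¹ * x ^ 2 * t * x⁻¹ * t = (t ^ r)⁻¹ * t ^ (s + 1) := by
    have e1 : x⁻¹ * t⁻¹ * x = (t ^ r)⁻¹ := by rw [← hconj]; group
    calc x⁻¹ * t⁻¹ * x ^ 2 * t * x⁻¹ * t
        = (x⁻¹ * t⁻¹ * x) * (x * t * x⁻¹) * t := by simp [sq, mul_assoc]
      _ = (t ^ r)⁻¹ * t ^ s * t := by rw [e1, hxt]
      _ = (t ^ r)⁻¹ * t ^ (s + 1) := by rw [mul_assoc, ← pow_succ]
  have hiff1 : x⁻¹ * t⁻¹ * x ^ 2 * t * x⁻¹ * t = 1 ↔ -a + a⁻¹ + 1 = 0 := by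
    rw [hw, inv_mul_eq_one, Eq.comm, key]
    push_cast
    rw [hs, ← ha]
    constructor
    · intro h; linear_combination h
    · intro h; linear_combination h
  exact ⟨hiff1, hbridge.trans (stmt18_aux a ha7)⟩
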